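/- Let X be a finite type, μ a probability measure on a finite family D of probability distributions on X all absolutely continuous with respect to D₀ in the sense of having D₀-square-integrable densities. Then κ̄_v(μ, D₀) ≤ κ̄₂(μ, D₀), where κ̄_v(μ,D₀) = sup_{φ:X→[0,1]} E_{D∼μ}[|√(E_D[φ]) - √(E_{D₀}[φ])|] and κ̄₂(μ,D₀) = sup over φ : X → ℝ with E_{D₀}[φ²] = 1 of E_{D∼μ}[|E_D[φ] - E_{D₀}[φ]|]. -/

import Mathlib

open Finset

def IsDist {X : Type*} [Fintype X] (D : X → ℝ) : Prop :=
  (∀ x, 0 ≤ D x) ∧ ∑ x, D x = 1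

def expec {X : Type*} [Fintype X] (D φ : X → ℝ) : ℝ := ∑ x, D x * φ x

/-- `κ̄_v(μ, D₀)`: the supremum over `φ : X → [0,1]` of the average (over
`D ∼ μ`) discrimination `|√(E_D[φ]) - √(E_{D₀}[φ])|`. -/
noncomputable def kbarv {X J : Type*} [Fintype X] [Fintype J]
    (μ : J → ℝ) (Ds : J → X → ℝ) (D0 : X → ℝ) : ℝ :=
  ⨆ φ : {φ : X → ℝ // ∀ x, φ x ∈ Set.Icc (0:ℝ) 1},
    ∑ j, μ j * |Real.sqrt (expec (Ds j) φ.1) - Real.sqrt (expec D0 φ.1)|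

/-- `κ̄₁(μ, D₀)`: the supremum over `φ : X → [-1,1]` of the average (over
`D ∼ μ`) discrimination `|E_D[φ] - E_{D₀}[φ]|`. -/
noncomputable def kbar1 {X J : Type*} [Fintype X] [Fintype J]
    (μ : J → ℝ) (Ds : J → X → ℝ) (D0 : X → ℝ) : ℝ :=
  ⨆ φ : {φ : X → ℝ // ∀ x, φ x ∈ Set.Icc (-1:ℝ) 1},
    ∑ j, μ j * |expec (Ds j) φ.1 - expec D0 φ.1|

/-- `κ̄₂(μ, D₀)`: the supremum over `φ : X → ℝ` with `E_{D₀}[φ²] = 1` of the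
average (over `D ∼ μ`) discrimination `|E_D[φ] - E_{D₀}[φ]|`. -/
noncomputable def kbar2 {X J : Type*} [Fintype X] [Fintype J]
    (μ : J → ℝ) (Ds : J → X → ℝ) (D0 : X → ℝ) : ℝ :=
  ⨆ φ : {φ : X → ℝ // ∑ x, D0 x * φ x ^ 2 = 1},
    ∑ j, μ j * |expec (Ds j) φ.1 - expec D0 φ.1|

private lemma sqrt_abs_sub_le {a b s : ℝ} (ha : 0 ≤ a) (hs : 0 < s)
    (hb : s ≤ Real.sqrt b) : |Real.sqrt a - Real.sqrt b| ≤ |a - b| / s := by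
  have hb0 : 0 ≤ b := by
    by_contra h
    have : Real.sqrt b = 0 := Real.sqrt_eq_zero_of_nonpos (le_of_lt (not_le.1 h))
    rw [this] at hb
    exact absurd hb (not_le.2 hs)
  rw [le_div_iff₀ hs]
  have key : |a - b| = |Real.sqrt a - Real.sqrt b| * (Real.sqrt a + Real.sqrt b) := by
    have : a - b = (Real.sqrt a - Real.sqrt b) * (Real.sqrt a + Real.sqrt b) := by
      have h1 := Real.sq_sqrt ha
      have h2 := Real.sq_sqrt hb0
      nlinarith
    rw [this, abs_mul, abs_of_nonneg (add_nonneg (Real.sqrt_nonneg _) (Real.sqrt_nonneg _))]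
  rw [key]
  apply mul_le_mul_of_nonneg_left _ (abs_nonneg _)
  have := Real.sqrt_nonneg a
  linarith

theorem stmt12 {X J : Type*} [Fintype X] [Fintype J] [Nonempty J]
    (D0 : X → ℝ) (hD0 : IsDist D0)
    (Ds : J → X → ℝ) (hDs : ∀ j, IsDist (Ds j))
    (habs : ∀ j x, D0 x = 0 → Ds j x = 0)
    (μ : J → ℝ) (hμ : IsDist μ) :
    kbarv μ Ds D0 ≤ kbar2 μ Ds D0 := by
  obtain ⟨hD0pos, hD0sum⟩ := hD0
  obtain ⟨hμpos, hμsum⟩ := hμ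
  -- the family defining kbar2
  set F : {φ : X → ℝ // ∑ x, D0 x * φ x ^ 2 = 1} → ℝ :=
    fun φ => ∑ j, μ j * |expec (Ds j) φ.1 - expec D0 φ.1| with hF
  -- boundedness of the kbar2 family
  have hbdd : BddAbove (Set.range F) := by
    refine ⟨∑ j, μ j * (Real.sqrt (∑ x, (if D0 x = 0 then 0 else (Ds j x)^2 / D0 x)) + 1), ?_⟩
    rintro _ ⟨⟨ψ, hψ⟩, rfl⟩
    apply Finset.sum_le_sum
    intro j _
    apply mul_le_mul_of_nonneg_left _ (hμpos j)
    have hg2 : ∑ x, (Real.sqrt (D0 x) * ψ x) ^ 2 = 1 := by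
      rw [← hψ]
      apply Finset.sum_congr rfl
      intro x _
      rw [mul_pow, Real.sq_sqrt (hD0pos x)]
    have h1 : |expec D0 ψ| ≤ 1 := by
      have hcs := Finset.sum_mul_sq_le_sq_mul_sq Finset.univ
        (fun x => Real.sqrt (D0 x)) (fun x => Real.sqrt (D0 x) * ψ x)
      have heq : ∑ x, Real.sqrt (D0 x) * (Real.sqrt (D0 x) * ψ x) = expec D0 ψ := by
        apply Finset.sum_congr rfl
        intro x _
        rw [← mul_assoc, Real.mul_self_sqrt (hD0pos x)]
      have heq2 : ∑ x, Real.sqrt (D0 x) ^ 2 = 1 := by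
        rw [← hD0sum]
        exact Finset.sum_congr rfl fun x _ => Real.sq_sqrt (hD0pos x)
      rw [heq, heq2, hg2, one_mul] at hcs
      calc |expec D0 ψ| = Real.sqrt ((expec D0 ψ) ^ 2) := (Real.sqrt_sq_eq_abs _).symm
        _ ≤ Real.sqrt 1 := Real.sqrt_le_sqrt hcs
        _ = 1 := Real.sqrt_one
    have h2 : |expec (Ds j) ψ| ≤
        Real.sqrt (∑ x, (if D0 x = 0 then 0 else (Ds j x)^2 / D0 x)) := by
      have hcs := Finset.sum_mul_sq_le_sq_mul_sq Finset.univ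
        (fun x => if D0 x = 0 then (0:ℝ) else Ds j x / Real.sqrt (D0 x))
        (fun x => Real.sqrt (D0 x) * ψ x)
      have heq : ∑ x, (if D0 x = 0 then (0:ℝ) else Ds j x / Real.sqrt (D0 x)) *
          (Real.sqrt (D0 x) * ψ x) = expec (Ds j) ψ := by
        apply Finset.sum_congr rfl
        intro x _
        by_cases h : D0 x = 0
        · simp [h, habs j x h]
        · have hx : 0 < D0 x := lt_of_le_of_ne (hD0pos x) (Ne.symm h)
          have hsx : Real.sqrt (D0 x) ≠ 0 := by positivity
          field_simp [h]
          rw [if_neg h]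
          field_simp
      have heq2 : ∑ x, (if D0 x = 0 then (0:ℝ) else Ds j x / Real.sqrt (D0 x)) ^ 2 =
          ∑ x, (if D0 x = 0 then 0 else (Ds j x)^2 / D0 x) := by
        apply Finset.sum_congr rfl
        intro x _
        by_cases h : D0 x = 0
        · simp [h]
        · have hx : 0 < D0 x := lt_of_le_of_ne (hD0pos x) (Ne.symm h)
          rw [if_neg h, if_neg h, div_pow, Real.sq_sqrt (hD0pos x)]
      rw [heq, heq2, hg2, mul_one] at hcs
      calc |expec (Ds j) ψ| = Real.sqrt ((expec (Ds j) ψ) ^ 2) := (Real.sqrt_sq_eq_abs _).symm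
        _ ≤ _ := Real.sqrt_le_sqrt hcs
    calc |expec (Ds j) ψ - expec D0 ψ| ≤ |expec (Ds j) ψ| + |expec D0 ψ| := abs_sub _ _
      _ ≤ _ := add_le_add h2 h1
  -- kbar2 is nonneg
  have hone : (∑ x, D0 x * (fun _ : X => (1:ℝ)) x ^ 2) = 1 := by simpa using hD0sum
  have hk2nonneg : 0 ≤ kbar2 μ Ds D0 := by
    have hle := le_ciSup hbdd ⟨fun _ => (1:ℝ), hone⟩
    have : F ⟨fun _ => (1:ℝ), hone⟩ = 0 := by
      simp only [hF]
      apply Finset.sum_eq_zero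
      intro j _
      have h1 : expec (Ds j) (fun _ => (1:ℝ)) = 1 := by
        simpa [expec] using (hDs j).2
      have h2 : expec D0 (fun _ => (1:ℝ)) = 1 := by simpa [expec] using hD0sum
      simp [h1, h2]
    rw [this] at hle
    exact hle
  -- main bound
  haveI : Nonempty {φ : X → ℝ // ∀ x, φ x ∈ Set.Icc (0:ℝ) 1} :=
    ⟨⟨fun _ => 0, fun _ => ⟨le_refl 0, zero_le_one⟩⟩⟩
  apply ciSup_le
  rintro ⟨φ, hφ⟩
  have haj : ∀ j, 0 ≤ expec (Ds j) φ := fun j =>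
    Finset.sum_nonneg fun x _ => mul_nonneg ((hDs j).1 x) (hφ x).1
  by_cases hz : (∑ x, D0 x * φ x ^ 2) = 0
  · -- degenerate case : φ vanishes on the support of D0
    have hterm : ∀ x, D0 x * φ x ^ 2 = 0 := by
      intro x
      have := (Finset.sum_eq_zero_iff_of_nonneg (fun x _ =>
        mul_nonneg (hD0pos x) (sq_nonneg _))).1 hz x (Finset.mem_univ x)
      exact this
    have hφ0 : ∀ x, D0 x ≠ 0 → φ x = 0 := by
      intro x hx
      have := hterm x
      rcases mul_eq_zero.1 this with h | h
      · exact absurd h hx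
      · exact pow_eq_zero_iff (two_ne_zero) |>.1 h
    have hb : expec D0 φ = 0 := by
      apply Finset.sum_eq_zero
      intro x _
      by_cases h : D0 x = 0
      · simp [h]
      · simp [hφ0 x h]
    have ha : ∀ j, expec (Ds j) φ = 0 := by
      intro j
      apply Finset.sum_eq_zero
      intro x _
      by_cases h : D0 x = 0
      · simp [habs j x h]
      · simp [hφ0 x h]
    have : (∑ j, μ j * |Real.sqrt (expec (Ds j) φ) - Real.sqrt (expec D0 φ)|) = 0 := by
      apply Finset.sum_eq_zero
      intro j _
      simp [ha j, hb]
    rw [this]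
    exact hk2nonneg
  · -- normalize φ
    have ht : 0 < ∑ x, D0 x * φ x ^ 2 :=
      lt_of_le_of_ne (Finset.sum_nonneg fun x _ =>
        mul_nonneg (hD0pos x) (sq_nonneg _)) (Ne.symm hz)
    set s := Real.sqrt (∑ x, D0 x * φ x ^ 2) with hs
    have hspos : 0 < s := Real.sqrt_pos.2 ht
    have hss : s ^ 2 = ∑ x, D0 x * φ x ^ 2 := Real.sq_sqrt ht.le
    have hψnorm : ∑ x, D0 x * (fun x => φ x / s) x ^ 2 = 1 := by
      have : ∀ x, D0 x * (φ x / s) ^ 2 = (D0 x * φ x ^ 2) / s ^ 2 := by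
        intro x; field_simp
      simp only [this]
      rw [← Finset.sum_div, ← hss, div_self (by positivity)]
    -- per-j bound
    have key : ∀ j, |Real.sqrt (expec (Ds j) φ) - Real.sqrt (expec D0 φ)| ≤
        |expec (Ds j) (fun x => φ x / s) - expec D0 (fun x => φ x / s)| := by
      intro j
      have hbge : s ≤ Real.sqrt (expec D0 φ) := by
        rw [hs]
        apply Real.sqrt_le_sqrt
        apply Finset.sum_le_sum
        intro x _
        apply mul_le_mul_of_nonneg_left _ (hD0pos x)
        have h01 := hφ x
        nlinarith [h01.1, h01.2]
      have hmain := sqrt_abs_sub_le (haj j) hspos hbge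
      have hlin : ∀ D : X → ℝ, expec D (fun x => φ x / s) = expec D φ / s := by
        intro D
        simp only [expec]
        rw [Finset.sum_div]
        exact Finset.sum_congr rfl fun x _ => (mul_div_assoc _ _ _).symm
      rw [hlin, hlin, div_sub_div_same, abs_div, abs_of_pos hspos]
      exact hmain
    calc (∑ j, μ j * |Real.sqrt (expec (Ds j) φ) - Real.sqrt (expec D0 φ)|)
        ≤ ∑ j, μ j * |expec (Ds j) (fun x => φ x / s) - expec D0 (fun x => φ x / s)| := by
          apply Finset.sum_le_sum
          intro j _
          exact mul_le_mul_of_nonneg_left (key j) (hμpos j)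
      _ = F ⟨fun x => φ x / s, hψnorm⟩ := rfl
      _ ≤ kbar2 μ Ds D0 := le_ciSup hbdd _
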